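/- Assume |α_v| ≤ Q/2 for every vertex v (local minimality). Then t_1 − 3·t_3 ≥ (ε/2)·(q+1−√q)·r − √q·|α|. -/

import Mathlib

open scoped Classical
open Matrix

structure SComplex (V : Type) [DecidableEq V] where
  faces : Finset (Finset V)
  down_closed : ∀ σ ∈ faces, ∀ τ ⊆ σ, τ ∈ faces

namespace SComplex

variable {V : Type} [Fintype V] [DecidableEq V]

/-- The faces of cardinality `n` (i.e. of dimension `n-1`); so `K Y 2` is the edge set
and `K Y 3` the set of triangles. -/
def K (X : SComplex V) (n : ℕ) : Finset (Finset V) := X.faces.filter fun σ => σ.card = n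

/-- `X` is pure with all facets (maximal faces) of cardinality `D` (dimension `D-1`). -/
def IsPure (X : SComplex V) (D : ℕ) : Prop :=
  X.faces.Nonempty ∧ ∀ σ ∈ X.faces, ∃ τ ∈ X.faces, σ ⊆ τ ∧ τ.card = D

end SComplex

variable {V : Type} [Fintype V] [DecidableEq V]

/-- `t_i`: the number of triangles of `Y` containing exactly `i` edges of `α`. -/
def tcount (Y : SComplex V) (α : Finset (Finset V)) (i : ℕ) : ℕ :=
  ((Y.K 3).filter fun τ => (α.filter fun e => e ⊆ τ).card = i).card

/-- `α_v`: the set of edges of `α` containing the vertex `v`. -/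
def alphaV (α : Finset (Finset V)) (v : V) : Finset (Finset V) :=
  α.filter fun e => v ∈ e

/-- The 1-skeleton of `Y`, as a simple graph on the vertex type. -/
def skeletonGraph (Y : SComplex V) : SimpleGraph V where
  Adj u w := u ≠ w ∧ ({u, w} : Finset V) ∈ Y.faces
  symm := by
    constructor
    intro u w h
    exact ⟨h.1.symm, by rw [Finset.pair_comm]; exact h.2⟩
  loopless := by constructor; intro u h; exact h.1 rfl

/-- The vertices of the link of `v`: the edges of `Y` containing `v`. -/
def linkVerts (Y : SComplex V) (v : V) : Finset (Finset V) :=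
  (Y.K 2).filter fun e => v ∈ e

/-- The link graph `Y_v`: vertices are the edges of `Y` containing `v`, two edges being
adjacent iff they lie in a common triangle of `Y`. -/
def linkGraph (Y : SComplex V) (v : V) : SimpleGraph ↥(linkVerts Y v) where
  Adj e f := e ≠ f ∧ (e.1 ∪ f.1) ∈ Y.K 3
  symm := by
    constructor
    intro e f h
    exact ⟨h.1.symm, by rw [Finset.union_comm]; exact h.2⟩
  loopless := by constructor; intro e h; exact h.1 rfl

/-- The standing hypotheses on the 2-dimensional complex `Y` (with `Q = 2(q²+q+1)`):
`q ≥ 2`; `Y` is finite pure 2-dimensional; (i) every edge lies in exactly `q+1` triangles;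
(ii) the 1-skeleton is a connected `Q`-regular graph whose adjacency eigenvalues other than
`Q` have absolute value at most `6q`; (iii) every link `Y_v` is a connected bipartite
`(q+1)`-regular graph on `Q` vertices whose adjacency eigenvalues other than `±(q+1)` have
absolute value at most `√q`. -/
def Setup (q : ℕ) (Y : SComplex V) : Prop :=
  2 ≤ q ∧ Y.IsPure 3 ∧
  (∀ e ∈ Y.K 2, ((Y.K 3).filter fun τ => e ⊆ τ).card = q + 1) ∧
  (skeletonGraph Y).Connected ∧
  (∀ v : V, (skeletonGraph Y).degree v = 2 * (q ^ 2 + q + 1)) ∧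
  (∀ mu : ℝ, (∃ f : V → ℝ, f ≠ 0 ∧ (skeletonGraph Y).adjMatrix ℝ *ᵥ f = mu • f) →
    mu = 2 * ((q : ℝ) ^ 2 + q + 1) ∨ |mu| ≤ 6 * (q : ℝ)) ∧
  (∀ v : V,
    (linkGraph Y v).Connected ∧
    (∃ C : ↥(linkVerts Y v) → Bool, ∀ a b, (linkGraph Y v).Adj a b → C a ≠ C b) ∧
    (∀ a : ↥(linkVerts Y v), (linkGraph Y v).degree a = q + 1) ∧
    (linkVerts Y v).card = 2 * (q ^ 2 + q + 1) ∧
    (∀ mu : ℝ, (∃ f : ↥(linkVerts Y v) → ℝ, f ≠ 0 ∧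
        (linkGraph Y v).adjMatrix ℝ *ᵥ f = mu • f) →
      mu = (q : ℝ) + 1 ∨ mu = -((q : ℝ) + 1) ∨ |mu| ≤ Real.sqrt q))

section Counting
variable {V : Type} [Fintype V] [DecidableEq V]

lemma edge_card {Y : SComplex V} {e : Finset V} (he : e ∈ Y.K 2) : e.card = 2 :=
  (Finset.mem_filter.1 he).2

lemma sum_card_filter {A B : Type} (t : Finset A) (s : Finset B) (P : A → B → Prop)
    [∀ a, DecidablePred (P a)] :
    ∑ a ∈ t, (s.filter (P a)).card = ((t ×ˢ s).filter fun x => P x.1 x.2).card :=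
  calc ∑ a ∈ t, (s.filter (P a)).card = ∑ a ∈ t, ∑ b ∈ s, if P a b then 1 else 0 :=
        Finset.sum_congr rfl fun a _ => Finset.card_filter _ _
    _ = ((t ×ˢ s).filter fun x => P x.1 x.2).card := by
        rw [Finset.card_filter, Finset.sum_product]

lemma nτ_le_three (Y : SComplex V) (α : Finset (Finset V)) (hα : α ⊆ Y.K 2)
    (τ : Finset V) (hτ : τ ∈ Y.K 3) : (α.filter fun e => e ⊆ τ).card ≤ 3 := by
  have hsub : α.filter (fun e => e ⊆ τ) ⊆ τ.powersetCard 2 := by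
    intro e he
    rw [Finset.mem_powersetCard]
    have he' := Finset.mem_filter.1 he
    exact ⟨he'.2, edge_card (hα he'.1)⟩
  calc (α.filter fun e => e ⊆ τ).card ≤ (τ.powersetCard 2).card := Finset.card_le_card hsub
    _ = τ.card.choose 2 := Finset.card_powersetCard 2 τ
    _ = 3 := by rw [(Finset.mem_filter.1 hτ).2]; rfl

lemma sumI (Y : SComplex V) (q : ℕ) (α : Finset (Finset V)) (hα : α ⊆ Y.K 2)
    (hq : ∀ e ∈ Y.K 2, ((Y.K 3).filter fun τ => e ⊆ τ).card = q + 1) :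
    ∑ τ ∈ Y.K 3, (α.filter fun e => e ⊆ τ).card = (q + 1) * α.card := by
  have h1 : ∀ τ ∈ Y.K 3, (α.filter fun e => e ⊆ τ).card = ∑ e ∈ α, if e ⊆ τ then 1 else 0 :=
    fun τ _ => Finset.card_filter _ _
  rw [Finset.sum_congr rfl h1, Finset.sum_comm]
  have h2 : ∀ e ∈ α, (∑ τ ∈ Y.K 3, if e ⊆ τ then 1 else 0) = q + 1 := by
    intro e he
    rw [← Finset.card_filter]
    exact hq e (hα he)
  rw [Finset.sum_congr rfl h2, Finset.sum_const, smul_eq_mul, mul_comm]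

lemma fiberwise (Y : SComplex V) (α : Finset (Finset V)) (hα : α ⊆ Y.K 2)
    (F : ℕ → ℕ) (hF0 : F 0 = 0) :
    ∑ τ ∈ Y.K 3, F ((α.filter fun e => e ⊆ τ).card) =
      F 1 * tcount Y α 1 + F 2 * tcount Y α 2 + F 3 * tcount Y α 3 := by
  have hmaps : ∀ τ ∈ Y.K 3, (α.filter fun e => e ⊆ τ).card ∈ Finset.range 4 := by
    intro τ hτ
    rw [Finset.mem_range]
    exact Nat.lt_succ_of_le (nτ_le_three Y α hα τ hτ)
  rw [← Finset.sum_fiberwise_of_maps_to hmaps]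
  have h1 : ∀ j ∈ Finset.range 4,
      (∑ τ ∈ (Y.K 3).filter (fun τ => (α.filter fun e => e ⊆ τ).card = j),
        F ((α.filter fun e => e ⊆ τ).card)) = F j * tcount Y α j := by
    intro j _
    rw [Finset.sum_congr rfl (fun τ hτ => by rw [(Finset.mem_filter.1 hτ).2]),
      Finset.sum_const, smul_eq_mul, mul_comm]
    rfl
  rw [Finset.sum_congr rfl h1]
  rw [show (4:ℕ) = 3 + 1 from rfl, Finset.sum_range_succ, Finset.sum_range_succ,
    Finset.sum_range_succ, Finset.sum_range_one, hF0]
  ring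

lemma sum_alphaV (α : Finset (Finset V)) (Y : SComplex V) (hα : α ⊆ Y.K 2) :
    ∑ v : V, (alphaV α v).card = 2 * α.card := by
  unfold alphaV
  rw [sum_card_filter]
  have : ∑ e ∈ α, (Finset.univ.filter fun v => v ∈ e).card = 2 * α.card := by
    have h1 : ∀ e ∈ α, (Finset.univ.filter fun v => v ∈ e).card = 2 := by
      intro e he
      rw [show (Finset.univ.filter fun v => v ∈ e) = e by ext x; simp]
      exact edge_card (hα he)
    rw [Finset.sum_congr rfl h1, Finset.sum_const, smul_eq_mul, mul_comm]
  rw [← this, sum_card_filter]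
  apply Finset.card_bij (fun x _ => (x.2, x.1))
  · intro a ha
    rw [Finset.mem_filter] at ha ⊢
    refine ⟨Finset.mem_product.2 ⟨(Finset.mem_product.1 ha.1).2, Finset.mem_univ _⟩, ha.2⟩
  · intro a ha b hb hab
    exact Prod.ext (congrArg Prod.snd hab) (congrArg Prod.fst hab)
  · intro b hb
    refine ⟨(b.2, b.1), ?_, rfl⟩
    rw [Finset.mem_filter] at hb ⊢
    exact ⟨Finset.mem_product.2 ⟨Finset.mem_univ _, (Finset.mem_product.1 hb.1).1⟩, hb.2⟩

end Counting

section Triples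
variable {V : Type} [Fintype V] [DecidableEq V]

def Ncount (Y : SComplex V) (α : Finset (Finset V)) (v : V) : ℕ :=
  (((alphaV α v) ×ˢ (alphaV α v)).filter fun p => p.1 ≠ p.2 ∧ p.1 ∪ p.2 ∈ Y.K 3).card

lemma pair_subset_eq {e : Finset V} {v v' : V} (hv : v ∈ e) (hv' : v' ∈ e)
    (hne : v ≠ v') (hcard : e.card = 2) : e = {v, v'} := by
  have hsub : ({v, v'} : Finset V) ⊆ e := by
    intro x hx
    rcases Finset.mem_insert.1 hx with h | h
    · rwa [h]
    · rw [Finset.mem_singleton.1 h]; exact hv'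
  have hc2 : ({v, v'} : Finset V).card = 2 := Finset.card_pair hne
  exact (Finset.eq_of_subset_of_card_le hsub (by rw [hcard, hc2])).symm

lemma tri_bij (Y : SComplex V) (α : Finset (Finset V)) (hα : α ⊆ Y.K 2) :
    ((Finset.univ ×ˢ α.offDiag).filter fun x : V × (Finset V × Finset V) =>
        x.1 ∈ x.2.1 ∧ x.1 ∈ x.2.2 ∧ x.2.1 ∪ x.2.2 ∈ Y.K 3).card
      = ((Y.K 3 ×ˢ α.offDiag).filter fun x => x.2.1 ⊆ x.1 ∧ x.2.2 ⊆ x.1).card := by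
  apply Finset.card_bij (fun x _ => (x.2.1 ∪ x.2.2, x.2))
  · rintro ⟨v, e, f⟩ hx
    rw [Finset.mem_filter, Finset.mem_product] at hx ⊢
    obtain ⟨⟨-, hoff⟩, hv1, hv2, hK⟩ := hx
    exact ⟨⟨hK, hoff⟩, Finset.subset_union_left, Finset.subset_union_right⟩
  · rintro ⟨v, e, f⟩ hx ⟨v', e', f'⟩ hy hxy
    rw [Finset.mem_filter, Finset.mem_product, Finset.mem_offDiag] at hx hy
    obtain ⟨⟨-, he, hf, hef⟩, hv1, hv2, -⟩ := hx
    obtain ⟨⟨-, -, -, -⟩, hv1', hv2', -⟩ := hy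
    have hp : e = e' ∧ f = f' := by
      have := congrArg Prod.snd hxy
      exact ⟨congrArg Prod.fst this, congrArg Prod.snd this⟩
    obtain ⟨he', hf'⟩ := hp
    subst he'
    subst hf' 
    have hvv : v = v' := by
      by_contra hne
      have he2 : e.card = 2 := edge_card (hα he)
      have hf2 : f.card = 2 := edge_card (hα hf)
      have h1 : e = {v, v'} := pair_subset_eq hv1 hv1' hne he2
      have h2 : f = {v, v'} := pair_subset_eq hv2 hv2' hne hf2
      exact hef (h1.trans h2.symm)
    rw [hvv]
  · rintro ⟨τ, e, f⟩ hb
    rw [Finset.mem_filter, Finset.mem_product, Finset.mem_offDiag] at hb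
    obtain ⟨⟨hτ, he, hf, hef⟩, hsube, hsubf⟩ := hb
    have he2 : e.card = 2 := edge_card (hα he)
    have hf2 : f.card = 2 := edge_card (hα hf)
    have hτ3 : τ.card = 3 := (Finset.mem_filter.1 hτ).2
    have huc : (e ∪ f).card + (e ∩ f).card = 4 := by
      rw [Finset.card_union_add_card_inter, he2, hf2]
    have hu3 : (e ∪ f).card ≤ 3 := by
      rw [← hτ3]
      exact Finset.card_le_card (Finset.union_subset hsube hsubf)
    have hi1 : (e ∩ f).card ≤ 1 := by
      by_contra hgt
      push_neg at hgt
      have hh : e ∩ f = e :=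
        Finset.eq_of_subset_of_card_le (Finset.inter_subset_left) (by omega)
      have h1 : e ⊆ f := hh ▸ Finset.inter_subset_right
      exact hef (Finset.eq_of_subset_of_card_le h1 (le_of_eq (hf2.trans he2.symm)))
    have hipos : 1 ≤ (e ∩ f).card := by omega
    obtain ⟨v, hv⟩ := Finset.card_pos.1 (by omega : 0 < (e ∩ f).card)
    have hunion : e ∪ f = τ :=
      Finset.eq_of_subset_of_card_le (Finset.union_subset hsube hsubf) (by omega)
    refine ⟨(v, e, f), ?_, ?_⟩
    · rw [Finset.mem_filter, Finset.mem_product, Finset.mem_offDiag]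
      exact ⟨⟨Finset.mem_univ _, he, hf, hef⟩, Finset.mem_of_mem_inter_left hv,
        Finset.mem_of_mem_inter_right hv, hunion ▸ hτ⟩
    · rw [hunion]

lemma sumN_eq (Y : SComplex V) (α : Finset (Finset V)) (hα : α ⊆ Y.K 2) :
    ∑ v : V, Ncount Y α v =
      2 * tcount Y α 2 + 6 * tcount Y α 3 := by
  have step1 : ∀ v : V, Ncount Y α v =
      (α.offDiag.filter fun p => v ∈ p.1 ∧ v ∈ p.2 ∧ p.1 ∪ p.2 ∈ Y.K 3).card := by
    intro v
    unfold Ncount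
    congr 1
    ext ⟨e, f⟩
    simp only [Finset.mem_filter, Finset.mem_product, Finset.mem_offDiag, alphaV]
    tauto
  have step2 : ∑ v : V, Ncount Y α v =
      ((Finset.univ ×ˢ α.offDiag).filter fun x : V × (Finset V × Finset V) =>
        x.1 ∈ x.2.1 ∧ x.1 ∈ x.2.2 ∧ x.2.1 ∪ x.2.2 ∈ Y.K 3).card := by
    rw [Finset.sum_congr rfl fun v _ => step1 v]
    exact sum_card_filter _ _ _
  have step3 : ∀ τ ∈ Y.K 3, ((α.filter fun e => e ⊆ τ).offDiag).card =
      (α.offDiag.filter fun p => p.1 ⊆ τ ∧ p.2 ⊆ τ).card := by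
    intro τ _
    congr 1
    ext ⟨e, f⟩
    simp only [Finset.mem_offDiag, Finset.mem_filter]
    tauto
  have step4 : ∑ τ ∈ Y.K 3, ((α.filter fun e => e ⊆ τ).offDiag).card =
      ((Y.K 3 ×ˢ α.offDiag).filter fun x => x.2.1 ⊆ x.1 ∧ x.2.2 ⊆ x.1).card := by
    rw [Finset.sum_congr rfl step3]
    exact sum_card_filter _ _ _
  have step5 : ∑ τ ∈ Y.K 3, ((α.filter fun e => e ⊆ τ).offDiag).card =
      2 * tcount Y α 2 + 6 * tcount Y α 3 := by
    have h1 : ∀ τ ∈ Y.K 3, ((α.filter fun e => e ⊆ τ).offDiag).card =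
        (fun n => n * n - n) ((α.filter fun e => e ⊆ τ).card) := by
      intro τ _
      exact Finset.offDiag_card _
    rw [Finset.sum_congr rfl h1, fiberwise Y α hα (fun n => n * n - n) rfl]
    norm_num
  rw [step2, tri_bij Y α hα, ← step4, step5]

end Triples

section Link
variable {V : Type} [Fintype V] [DecidableEq V]

lemma mem_linkVerts_of_alphaV {Y : SComplex V} {α : Finset (Finset V)} (hα : α ⊆ Y.K 2)
    {v : V} {e : Finset V} (he : e ∈ α) (hv : v ∈ e) : e ∈ linkVerts Y v :=
  Finset.mem_filter.2 ⟨hα he, hv⟩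

lemma card_pairs (Y : SComplex V) (α : Finset (Finset V)) (hα : α ⊆ Y.K 2) (v : V) :
    ((Finset.univ ×ˢ Finset.univ : Finset (↥(linkVerts Y v) × ↥(linkVerts Y v))).filter
        fun p => (linkGraph Y v).Adj p.1 p.2 ∧ p.1.1 ∈ α ∧ p.2.1 ∈ α).card
      = Ncount Y α v := by
  apply Finset.card_bij (fun p _ => (p.1.1, p.2.1))
  · rintro ⟨a, b⟩ hp
    rw [Finset.mem_filter] at hp
    obtain ⟨-, ⟨hne, hK⟩, ha, hb⟩ := hp
    rw [Finset.mem_filter, Finset.mem_product]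
    refine ⟨⟨?_, ?_⟩, fun h => hne (Subtype.ext h), hK⟩
    · exact Finset.mem_filter.2 ⟨ha, (Finset.mem_filter.1 a.2).2⟩
    · exact Finset.mem_filter.2 ⟨hb, (Finset.mem_filter.1 b.2).2⟩
  · rintro ⟨a, b⟩ - ⟨a', b'⟩ - h
    have h1 := congrArg Prod.fst h
    have h2 := congrArg Prod.snd h
    exact Prod.ext (Subtype.ext h1) (Subtype.ext h2)
  · rintro ⟨e, f⟩ hef
    rw [Finset.mem_filter, Finset.mem_product] at hef
    obtain ⟨⟨he, hf⟩, hne, hK⟩ := hef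
    have he' := Finset.mem_filter.1 he
    have hf' := Finset.mem_filter.1 hf
    refine ⟨(⟨e, mem_linkVerts_of_alphaV hα he'.1 he'.2⟩,
      ⟨f, mem_linkVerts_of_alphaV hα hf'.1 hf'.2⟩), ?_, rfl⟩
    rw [Finset.mem_filter]
    exact ⟨Finset.mem_product.2 ⟨Finset.mem_univ _, Finset.mem_univ _⟩,
      ⟨fun h => hne (congrArg Subtype.val h), hK⟩, he'.1, hf'.1⟩

lemma Ncount_eq_dot (Y : SComplex V) (α : Finset (Finset V)) (hα : α ⊆ Y.K 2) (v : V) :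
    (Ncount Y α v : ℝ) =
      (fun e : ↥(linkVerts Y v) => if e.1 ∈ α then (1:ℝ) else 0) ⬝ᵥ
        ((linkGraph Y v).adjMatrix ℝ *ᵥ fun e : ↥(linkVerts Y v) =>
          if e.1 ∈ α then (1:ℝ) else 0) := by
  have hterm : ∀ a b : ↥(linkVerts Y v),
      (if a.1 ∈ α then (1:ℝ) else 0) *
        ((if (linkGraph Y v).Adj a b then (1:ℝ) else 0) * (if b.1 ∈ α then (1:ℝ) else 0))
      = if (linkGraph Y v).Adj a b ∧ a.1 ∈ α ∧ b.1 ∈ α then (1:ℝ) else 0 := by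
    intro a b
    split_ifs <;> simp_all
  calc (Ncount Y α v : ℝ)
      = (((Finset.univ ×ˢ Finset.univ : Finset (↥(linkVerts Y v) × ↥(linkVerts Y v))).filter
          fun p => (linkGraph Y v).Adj p.1 p.2 ∧ p.1.1 ∈ α ∧ p.2.1 ∈ α).card : ℝ) := by
        rw [card_pairs Y α hα v]
    _ = ∑ p ∈ (Finset.univ ×ˢ Finset.univ :
          Finset (↥(linkVerts Y v) × ↥(linkVerts Y v))),
          if (linkGraph Y v).Adj p.1 p.2 ∧ p.1.1 ∈ α ∧ p.2.1 ∈ α then (1:ℝ) else 0 := by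
        rw [Finset.sum_boole]
    _ = ∑ a : ↥(linkVerts Y v), ∑ b : ↥(linkVerts Y v),
          if (linkGraph Y v).Adj a b ∧ a.1 ∈ α ∧ b.1 ∈ α then (1:ℝ) else 0 := by
        rw [Finset.sum_product]
    _ = _ := by
        symm
        rw [dotProduct]
        refine Finset.sum_congr rfl fun a _ => ?_
        rw [Matrix.mulVec, dotProduct, Finset.mul_sum]
        refine Finset.sum_congr rfl fun b _ => ?_
        rw [SimpleGraph.adjMatrix_apply]
        exact hterm a b

lemma sum_ind (Y : SComplex V) (α : Finset (Finset V)) (hα : α ⊆ Y.K 2) (v : V) :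
    ∑ a : ↥(linkVerts Y v), (if a.1 ∈ α then (1:ℝ) else 0) = ((alphaV α v).card : ℝ) := by
  rw [Finset.sum_coe_sort (linkVerts Y v) (fun e => if e ∈ α then (1:ℝ) else 0),
    Finset.sum_boole]
  congr 1
  congr 1
  ext e
  simp only [Finset.mem_filter, alphaV, linkVerts]
  constructor
  · rintro ⟨⟨-, hv⟩, he⟩; exact ⟨he, hv⟩
  · rintro ⟨he, hv⟩; exact ⟨⟨hα he, hv⟩, he⟩

lemma sum_ind_sq (Y : SComplex V) (α : Finset (Finset V)) (hα : α ⊆ Y.K 2) (v : V) :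
    ∑ a : ↥(linkVerts Y v), (if a.1 ∈ α then (1:ℝ) else 0) ^ 2 = ((alphaV α v).card : ℝ) := by
  rw [← sum_ind Y α hα v]
  refine Finset.sum_congr rfl fun a _ => ?_
  split_ifs <;> norm_num

end Link
section Spectral
variable {W : Type} [Fintype W] [DecidableEq W]

lemma eigen_const (G : SimpleGraph W) [DecidableRel G.Adj]
    (k : ℕ) (hconn : G.Connected) (hreg : ∀ u, G.degree u = k)
    (f : W → ℝ) (hf : G.adjMatrix ℝ *ᵥ f = (k : ℝ) • f) :
    ∀ u w : W, f u = f w := by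
  have hne : Nonempty W := hconn.nonempty
  obtain ⟨u₀, -, hmax⟩ := Finset.exists_max_image Finset.univ f ⟨Classical.arbitrary W, Finset.mem_univ _⟩
  have hmax' : ∀ u, f u ≤ f u₀ := fun u => hmax u (Finset.mem_univ u)
  have key : ∀ u, f u = f u₀ → ∀ w, G.Adj u w → f w = f u₀ := by
    intro u hu w hadj
    by_contra hlt
    have hlt' : f w < f u₀ := lt_of_le_of_ne (hmax' w) hlt
    have hsum : ∑ x ∈ G.neighborFinset u, f x = (k : ℝ) * f u₀ := by
      have := congrFun hf u
      rw [SimpleGraph.adjMatrix_mulVec_apply] at this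
      simpa [hu] using this
    have hstrict : ∑ x ∈ G.neighborFinset u, f x < ∑ _x ∈ G.neighborFinset u, f u₀ := by
      apply Finset.sum_lt_sum (fun i _ => hmax' i)
      exact ⟨w, by simpa using hadj, hlt'⟩
    rw [Finset.sum_const] at hstrict
    have hcard : (G.neighborFinset u).card = k := by
      rw [SimpleGraph.card_neighborFinset_eq_degree]; exact hreg u
    rw [hcard, nsmul_eq_mul] at hstrict
    linarith [hsum, hstrict]
  have step : ∀ {a c : W} (p : G.Walk a c), f a = f u₀ → f c = f u₀ := by
    intro a c p
    induction p with
    | nil => exact id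
    | cons hadj _ ih => exact fun ha => ih (key _ ha _ hadj)
  have main : ∀ u, f u = f u₀ := fun u => (hconn.preconnected u₀ u).elim fun p => step p rfl
  intro u w; rw [main u, main w]

end Spectral

section Spectral2
variable {W : Type} [Fintype W] [DecidableEq W]

lemma quad_bound_perp (G : SimpleGraph W) [DecidableRel G.Adj]
    (k : ℕ) (hconn : G.Connected) (hreg : ∀ u, G.degree u = k)
    (b : ℝ) (hb : 0 ≤ b)
    (heig : ∀ mu : ℝ, (∃ f : W → ℝ, f ≠ 0 ∧ G.adjMatrix ℝ *ᵥ f = mu • f) →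
      mu = (k:ℝ) ∨ mu ≤ b)
    (g : W → ℝ) (hg : ∑ u, g u = 0) :
    g ⬝ᵥ (G.adjMatrix ℝ *ᵥ g) ≤ b * ∑ u, g u ^ 2 := by
  set A : Matrix W W ℝ := G.adjMatrix ℝ with hAdef
  have hsym0 : A.IsSymm := G.isSymm_adjMatrix
  have hA : A.IsHermitian := by
    rw [Matrix.IsHermitian, Matrix.conjTranspose_eq_transpose_of_trivial]
    exact hsym0
  set e := hA.eigenvectorBasis with he
  set lam := hA.eigenvalues with hlam
  have hinner : ∀ x y : EuclideanSpace ℝ W, (inner ℝ x y : ℝ) = (⇑x) ⬝ᵥ (⇑y) := by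
    intro x y
    simp [PiLp.inner_apply, dotProduct, mul_comm]
  -- treat g as euclidean vector
  set g' : EuclideanSpace ℝ W := WithLp.toLp 2 g with hg'
  set y' : EuclideanSpace ℝ W := WithLp.toLp 2 (A *ᵥ g) with hy'
  have hexp : (inner ℝ g' y' : ℝ) = ∑ i, lam i * (inner ℝ g' (e i) : ℝ) ^ 2 := by
    rw [← (e).sum_inner_mul_inner g' y']
    apply Finset.sum_congr rfl
    intro i _
    have h1 : (inner ℝ (e i) y' : ℝ) = lam i * (inner ℝ (e i) g' : ℝ) := by
      rw [hinner, hinner, hy']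
      calc (⇑(e i)) ⬝ᵥ (A *ᵥ g) = ((⇑(e i)) ᵥ* A) ⬝ᵥ g := by rw [Matrix.dotProduct_mulVec]
        _ = (A *ᵥ ⇑(e i)) ⬝ᵥ g := by rw [← hsym0.eq, Matrix.vecMul_transpose, hsym0.eq]
        _ = (lam i • ⇑(e i)) ⬝ᵥ g := by rw [hA.mulVec_eigenvectorBasis]
        _ = lam i * ((⇑(e i)) ⬝ᵥ g) := by rw [smul_dotProduct]; rfl
    rw [h1, real_inner_comm g' (e i)]
    ring
  have hbound : ∀ i, lam i * (inner ℝ g' (e i) : ℝ) ^ 2 ≤ b * (inner ℝ g' (e i) : ℝ) ^ 2 := by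
    intro i
    have hev := heig (lam i) ⟨⇑(e i), by
      intro h0
      exact (e.orthonormal.ne_zero i) (by ext u; exact congrFun h0 u),
      hA.mulVec_eigenvectorBasis i⟩
    rcases hev with hk | hle
    · -- eigenvalue k: eigenvector constant, inner product 0
      have hconst := eigen_const G k hconn hreg (⇑(e i)) (by rw [← hk]; exact hA.mulVec_eigenvectorBasis i)
      have hzero : (inner ℝ g' (e i) : ℝ) = 0 := by
        rw [hinner]
        obtain ⟨u1⟩ := hconn.nonempty
        have : ∀ u, (⇑(e i)) u = (⇑(e i)) u1 := fun u => hconst u u1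
        calc (⇑g') ⬝ᵥ (⇑(e i)) = ∑ u, g u * (⇑(e i)) u1 := by
              unfold dotProduct
              exact Finset.sum_congr rfl fun u _ => by rw [show (⇑g') u * (⇑(e i)) u = g u * (⇑(e i)) u from rfl, this u]
          _ = (∑ u, g u) * (⇑(e i)) u1 := by rw [Finset.sum_mul]
          _ = 0 := by rw [hg, zero_mul]
      rw [hzero]
      simp
    · exact mul_le_mul_of_nonneg_right hle (sq_nonneg _)
  have hpars : ∑ i, (inner ℝ g' (e i) : ℝ) ^ 2 = ∑ u, g u ^ 2 := by
    have := e.sum_inner_mul_inner g' g'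
    calc ∑ i, (inner ℝ g' (e i) : ℝ) ^ 2 = ∑ i, (inner ℝ g' (e i) : ℝ) * (inner ℝ (e i) g' : ℝ) := by
          apply Finset.sum_congr rfl; intro i _; rw [real_inner_comm g' (e i)]; ring
      _ = (inner ℝ g' g' : ℝ) := this
      _ = ∑ u, g u ^ 2 := by rw [hinner]; unfold dotProduct; exact Finset.sum_congr rfl fun u _ => (sq (g u)).symm
  calc g ⬝ᵥ (A *ᵥ g) = (inner ℝ g' y' : ℝ) := (hinner g' y').symm
    _ = ∑ i, lam i * (inner ℝ g' (e i) : ℝ) ^ 2 := hexp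
    _ ≤ ∑ i, b * (inner ℝ g' (e i) : ℝ) ^ 2 := Finset.sum_le_sum fun i _ => hbound i
    _ = b * ∑ i, (inner ℝ g' (e i) : ℝ) ^ 2 := by rw [Finset.mul_sum]
    _ = b * ∑ u, g u ^ 2 := by rw [hpars]

end Spectral2

section Spectral3
variable {W : Type} [Fintype W] [DecidableEq W]

lemma quad_bound (G : SimpleGraph W) [DecidableRel G.Adj]
    (k : ℕ) (hconn : G.Connected) (hreg : ∀ u, G.degree u = k)
    (b : ℝ) (hb : 0 ≤ b)
    (heig : ∀ mu : ℝ, (∃ f : W → ℝ, f ≠ 0 ∧ G.adjMatrix ℝ *ᵥ f = mu • f) →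
      mu = (k:ℝ) ∨ mu ≤ b)
    (f : W → ℝ) :
    f ⬝ᵥ (G.adjMatrix ℝ *ᵥ f) ≤
      (k : ℝ) * (∑ u, f u) ^ 2 / (Fintype.card W : ℝ)
        + b * (∑ u, f u ^ 2 - (∑ u, f u) ^ 2 / (Fintype.card W : ℝ)) := by
  set A : Matrix W W ℝ := G.adjMatrix ℝ with hAdef
  have hne : Nonempty W := hconn.nonempty
  set N : ℝ := (Fintype.card W : ℝ) with hN
  have hNpos : 0 < N := by
    rw [hN]; exact_mod_cast Fintype.card_pos
  set c : ℝ := (∑ u, f u) / N with hc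
  set g : W → ℝ := fun u => f u - c with hgdef
  have hgsum : ∑ u, g u = 0 := by
    rw [hgdef]
    rw [Finset.sum_sub_distrib, Finset.sum_const, Finset.card_univ, nsmul_eq_mul, hc]
    field_simp
    rw [hN]; ring
  set h : W → ℝ := fun _ => c with hhdef
  have hAh : A *ᵥ h = fun _ => (k : ℝ) * c := by
    funext u
    rw [hAdef, SimpleGraph.adjMatrix_mulVec_apply]
    rw [hhdef]
    simp only [Finset.sum_const, nsmul_eq_mul]
    rw [SimpleGraph.card_neighborFinset_eq_degree, hreg u]
  have hfgh : f = g + h := by funext u; simp [hgdef, hhdef]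
  have hgAh : g ⬝ᵥ (A *ᵥ h) = 0 := by
    rw [hAh]
    unfold dotProduct
    rw [← Finset.sum_mul, hgsum, zero_mul]
  have hsym0 : A.IsSymm := G.isSymm_adjMatrix
  have hhAg : h ⬝ᵥ (A *ᵥ g) = 0 := by
    rw [Matrix.dotProduct_mulVec, ← hsym0.eq, Matrix.vecMul_transpose, hAh]
    unfold dotProduct
    rw [← Finset.mul_sum, hgsum, mul_zero]
  have hhAh : h ⬝ᵥ (A *ᵥ h) = (k:ℝ) * c ^ 2 * N := by
    rw [hAh]
    unfold dotProduct
    rw [hhdef]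
    simp only [Finset.sum_const, Finset.card_univ, nsmul_eq_mul]
    rw [hN]; ring
  have hgsq : ∑ u, g u ^ 2 = ∑ u, f u ^ 2 - (∑ u, f u) ^ 2 / N := by
    have : ∀ u, g u ^ 2 = f u ^ 2 - 2 * c * f u + c ^ 2 := by
      intro u; rw [hgdef]; ring
    rw [Finset.sum_congr rfl fun u _ => this u]
    rw [Finset.sum_add_distrib, Finset.sum_sub_distrib, Finset.sum_const, Finset.card_univ,
      nsmul_eq_mul, ← Finset.mul_sum, hc]
    field_simp
    ring
  have hquad := quad_bound_perp G k hconn hreg b hb heig g hgsum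
  have hexpand : f ⬝ᵥ (A *ᵥ f) = g ⬝ᵥ (A *ᵥ g) + (k:ℝ) * c ^ 2 * N := by
    rw [hfgh, Matrix.mulVec_add, add_dotProduct, dotProduct_add,
      dotProduct_add, hgAh, hhAg, hhAh]
    ring
  rw [hexpand]
  have hcN : (k:ℝ) * c ^ 2 * N = (k:ℝ) * (∑ u, f u) ^ 2 / N := by
    rw [hc]; field_simp
  rw [hcN, ← hgsq]
  linarith [hquad]

end Spectral3

section Arith

lemma sqrt_le_q_add_one (q : ℕ) : Real.sqrt q ≤ (q : ℝ) + 1 := by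
  nlinarith [Real.sq_sqrt (by positivity : (0:ℝ) ≤ (q:ℝ)), Real.sqrt_nonneg (q:ℝ),
    Nat.cast_nonneg (α := ℝ) q]

lemma pv_all (q : ℕ) (x Nv : ℝ) (hx0 : 0 ≤ x)
    (hxQ : x ≤ 2 * ((q : ℝ) ^ 2 + q + 1) / 2)
    (hN : Nv ≤ ((q:ℝ)+1) * x^2 / (2 * ((q : ℝ) ^ 2 + q + 1))
      + Real.sqrt q * (x - x^2 / (2 * ((q : ℝ) ^ 2 + q + 1)))) :
    ((q:ℝ)+1)/2 * x - Nv ≥ -(Real.sqrt q / 2) * x := by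
  set Qr : ℝ := 2 * ((q : ℝ) ^ 2 + q + 1) with hQr
  have hQpos : 0 < Qr := by positivity
  set s : ℝ := Real.sqrt q with hs
  have hsle : s ≤ (q:ℝ)+1 := sqrt_le_q_add_one q
  have key : ((q:ℝ)+1)/2 * x - (((q:ℝ)+1) * x^2 / Qr + s * (x - x^2 / Qr))
      = (((q:ℝ)+1-s) * (x * (Qr - 2*x))) / (2*Qr) - (s/2) * x := by
    field_simp
    ring
  have hnn : 0 ≤ (((q:ℝ)+1-s) * (x * (Qr - 2*x))) / (2*Qr) := by
    apply div_nonneg _ (by positivity)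
    apply mul_nonneg (by linarith)
    apply mul_nonneg hx0 (by linarith)
  linarith [key, hN]

lemma pv_thin (q : ℕ) (ε : ℝ) (hε0 : 0 < ε) (x Nv : ℝ) (hx0 : 0 ≤ x)
    (hxthin : x ≤ (1 - ε) * (2 * ((q : ℝ) ^ 2 + q + 1)) / 2)
    (hN : Nv ≤ ((q:ℝ)+1) * x^2 / (2 * ((q : ℝ) ^ 2 + q + 1))
      + Real.sqrt q * (x - x^2 / (2 * ((q : ℝ) ^ 2 + q + 1)))) :
    ((q:ℝ)+1)/2 * x - Nv ≥ (ε/2) * ((q:ℝ)+1-Real.sqrt q) * x - (Real.sqrt q / 2) * x := by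
  set Qr : ℝ := 2 * ((q : ℝ) ^ 2 + q + 1) with hQr
  have hQpos : 0 < Qr := by positivity
  set s : ℝ := Real.sqrt q with hs
  have hsle : s ≤ (q:ℝ)+1 := sqrt_le_q_add_one q
  have key : ((q:ℝ)+1)/2 * x - (((q:ℝ)+1) * x^2 / Qr + s * (x - x^2 / Qr))
      = (((q:ℝ)+1-s) * (x * (Qr - 2*x))) / (2*Qr) - (s/2) * x := by
    field_simp
    ring
  have key2 : (((q:ℝ)+1-s) * (x * (Qr - 2*x))) / (2*Qr) - (ε/2) * ((q:ℝ)+1-s) * x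
      = (((q:ℝ)+1-s) * (x * ((1-ε)*Qr - 2*x))) / (2*Qr) := by
    field_simp
    ring
  have hnn : 0 ≤ (((q:ℝ)+1-s) * (x * ((1-ε)*Qr - 2*x))) / (2*Qr) := by
    apply div_nonneg _ (by positivity)
    apply mul_nonneg (by linarith)
    apply mul_nonneg hx0 (by linarith)
  linarith [key, key2, hN]

end Arith

lemma Ncount_bound {V : Type} [Fintype V] [DecidableEq V] (q : ℕ) (Y : SComplex V)
    (hY : Setup q Y) (α : Finset (Finset V)) (hα : α ⊆ Y.K 2) (v : V) :
    (Ncount Y α v : ℝ) ≤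
      ((q:ℝ)+1) * ((alphaV α v).card : ℝ)^2 / (2 * ((q : ℝ)^2 + q + 1))
        + Real.sqrt q * (((alphaV α v).card : ℝ)
            - ((alphaV α v).card : ℝ)^2 / (2 * ((q : ℝ)^2 + q + 1))) := by
  obtain ⟨hq2, -, -, -, -, -, hlink⟩ := hY
  obtain ⟨hconn, -, hdeg, hcard, heig⟩ := hlink v
  have heig' : ∀ mu : ℝ, (∃ g : ↥(linkVerts Y v) → ℝ, g ≠ 0 ∧
      (linkGraph Y v).adjMatrix ℝ *ᵥ g = mu • g) →
      mu = ((q+1 : ℕ) : ℝ) ∨ mu ≤ Real.sqrt q := by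
    intro mu hmu
    rcases heig mu hmu with h | h | h
    · left; rw [h]; push_cast; ring
    · right
      have h1 := Real.sqrt_nonneg (q:ℝ)
      have h2 : (0:ℝ) ≤ (q:ℝ) := Nat.cast_nonneg q
      rw [h]; linarith
    · right; exact (abs_le.1 h).2
  have hb := quad_bound (linkGraph Y v) (q+1) hconn hdeg (Real.sqrt q)
    (Real.sqrt_nonneg _) heig' (fun e => if e.1 ∈ α then (1:ℝ) else 0)
  rw [sum_ind Y α hα v, sum_ind_sq Y α hα v] at hb
  have hcard' : (Fintype.card ↥(linkVerts Y v) : ℝ) = 2 * ((q:ℝ)^2 + q + 1) := by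
    rw [Fintype.card_coe, hcard]; push_cast; ring
  rw [hcard'] at hb
  rw [Ncount_eq_dot Y α hα v]
  push_cast at hb
  exact hb


/-- Under the standing hypotheses, if `|α_v| ≤ Q/2` for every vertex `v`
(local minimality), then `t₁ − 3t₃ ≥ (ε/2)(q+1−√q)·r − √q·|α|`, where `r` is the total
contribution of the thin vertices. -/
theorem t1_sub_three_t3_lower_bound
    {V : Type} [Fintype V] [DecidableEq V] (q : ℕ) (Y : SComplex V) (hY : Setup q Y)
    (ε : ℝ) (hε0 : 0 < ε) (hε1 : ε < 1)
    (α : Finset (Finset V)) (hα : α ⊆ Y.K 2)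
    (hlocmin : ∀ v : V, ((alphaV α v).card : ℝ) ≤ 2 * ((q : ℝ) ^ 2 + q + 1) / 2) :
    (tcount Y α 1 : ℝ) - 3 * (tcount Y α 3 : ℝ) ≥
      (ε / 2) * ((q : ℝ) + 1 - Real.sqrt q) *
          (∑ v ∈ Finset.univ.filter (fun v : V => (alphaV α v).Nonempty ∧
              ((alphaV α v).card : ℝ) < (1 - ε) * (2 * ((q : ℝ) ^ 2 + q + 1)) / 2),
            ((alphaV α v).card : ℝ))
        - Real.sqrt q * (α.card : ℝ) := by
  have htri := hY.2.2.1
  -- natural number identities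
  have hI : ∑ τ ∈ Y.K 3, (α.filter fun e => e ⊆ τ).card = (q+1) * α.card := sumI Y q α hα htri
  have hII : ∑ τ ∈ Y.K 3, (α.filter fun e => e ⊆ τ).card
      = 1 * tcount Y α 1 + 2 * tcount Y α 2 + 3 * tcount Y α 3 :=
    fiberwise Y α hα (fun n => n) rfl
  have hsumα : ∑ v : V, (alphaV α v).card = 2 * α.card := sum_alphaV α Y hα
  have hsumN : ∑ v : V, Ncount Y α v = 2 * tcount Y α 2 + 6 * tcount Y α 3 := sumN_eq Y α hα
  -- cast to ℝ
  have e1 : ((q:ℝ)+1) * (α.card:ℝ)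
      = (tcount Y α 1 : ℝ) + 2*(tcount Y α 2 : ℝ) + 3*(tcount Y α 3 : ℝ) := by
    have := congrArg (Nat.cast (R := ℝ)) (hI.symm.trans hII)
    push_cast at this
    linarith [this]
  have e2 : (∑ v : V, ((alphaV α v).card : ℝ)) = 2 * (α.card : ℝ) := by
    have := congrArg (Nat.cast (R := ℝ)) hsumα
    push_cast at this
    exact this
  have e3 : (∑ v : V, (Ncount Y α v : ℝ))
      = 2*(tcount Y α 2 : ℝ) + 6*(tcount Y α 3 : ℝ) := by
    have := congrArg (Nat.cast (R := ℝ)) hsumN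
    push_cast at this
    exact this
  have hmain : (tcount Y α 1 : ℝ) - 3 * (tcount Y α 3 : ℝ)
      = ∑ v : V, (((q:ℝ)+1)/2 * ((alphaV α v).card : ℝ) - (Ncount Y α v : ℝ)) := by
    rw [Finset.sum_sub_distrib, ← Finset.mul_sum, e2, e3]
    linarith [e1]
  set P : V → Prop := fun v => (alphaV α v).Nonempty ∧
    ((alphaV α v).card : ℝ) < (1 - ε) * (2 * ((q : ℝ) ^ 2 + q + 1)) / 2 with hP
  have hsplit := Finset.sum_filter_add_sum_filter_not Finset.univ P
    (fun v => ((q:ℝ)+1)/2 * ((alphaV α v).card : ℝ) - (Ncount Y α v : ℝ))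
  have hthin : ∀ v ∈ Finset.univ.filter P,
      (ε/2) * ((q:ℝ)+1-Real.sqrt q) * ((alphaV α v).card : ℝ)
        - (Real.sqrt q / 2) * ((alphaV α v).card : ℝ)
      ≤ ((q:ℝ)+1)/2 * ((alphaV α v).card : ℝ) - (Ncount Y α v : ℝ) := by
    intro v hv
    have hv' := (Finset.mem_filter.1 hv).2
    exact pv_thin q ε hε0 _ _ (Nat.cast_nonneg _) (le_of_lt hv'.2)
      (Ncount_bound q Y hY α hα v)
  have hother : ∀ v ∈ Finset.univ.filter (fun v => ¬ P v),
      -(Real.sqrt q / 2) * ((alphaV α v).card : ℝ)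
      ≤ ((q:ℝ)+1)/2 * ((alphaV α v).card : ℝ) - (Ncount Y α v : ℝ) := by
    intro v _
    exact pv_all q _ _ (Nat.cast_nonneg _) (hlocmin v) (Ncount_bound q Y hY α hα v)
  have hb1 := Finset.sum_le_sum hthin
  have hb2 := Finset.sum_le_sum hother
  rw [Finset.sum_sub_distrib] at hb1
  rw [← Finset.mul_sum, ← Finset.mul_sum] at hb1
  rw [← Finset.mul_sum] at hb2
  set S1 := ∑ v ∈ Finset.univ.filter P, ((alphaV α v).card : ℝ) with hS1
  set S2 := ∑ v ∈ Finset.univ.filter (fun v => ¬ P v), ((alphaV α v).card : ℝ) with hS2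
  have hxsum : S1 + S2 = 2 * (α.card : ℝ) := by
    rw [hS1, hS2, Finset.sum_filter_add_sum_filter_not Finset.univ P, e2]
  rw [ge_iff_le, hmain, ← hsplit]
  calc (ε / 2) * ((q : ℝ) + 1 - Real.sqrt q) * S1 - Real.sqrt q * (α.card : ℝ)
      = ((ε / 2) * ((q : ℝ) + 1 - Real.sqrt q) * S1 - (Real.sqrt q / 2) * S1)
        + (-(Real.sqrt q / 2) * S2) := by
        have : Real.sqrt q * (α.card : ℝ) = (Real.sqrt q / 2) * (S1 + S2) := by
          rw [hxsum]; ring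
        rw [this]; ring
    _ ≤ _ := add_le_add hb1 hb2
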